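/- arXiv:1308.0997 — 2 statements merged into one kernel-verified Lean document; each statement's English description precedes it below -/
import Mathlib

section
/- Let R be a commutative ring that is a ℚ-algebra and let a, b ∈ R. Then the Wronskian-type identity (x²/4 − 1)·(f₂″·f₁′ − f₂′·f₁″) = a·b·(f₂′·f₁ − f₂·f₁′) holds in R[[x]]. -/
open PowerSeries

noncomputable def f₁ {R : Type*} [CommRing R] [Algebra ℚ R] (a b : R) : R⟦X⟧ :=
  PowerSeries.mk fun n =>
    if n % 2 = 0 then
      ((Nat.factorial n : ℚ))⁻¹ • ∏ r ∈ Finset.range (n / 2), ((a + (r : R)) * (b + (r : R)))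
    else 0

noncomputable def f₂ {R : Type*} [CommRing R] [Algebra ℚ R] (a b : R) : R⟦X⟧ :=
  PowerSeries.mk fun n =>
    if n % 2 = 1 then
      ((Nat.factorial n : ℚ))⁻¹ • ∏ r ∈ Finset.range (n / 2),
        ((a + (r : R) + algebraMap ℚ R (1/2)) * (b + (r : R) + algebraMap ℚ R (1/2)))
    else 0

noncomputable def f₃ {R : Type*} [CommRing R] [Algebra ℚ R] (a b : R) : R⟦X⟧ :=
  PowerSeries.mk fun n =>
    if n % 2 = 0 then
      ((Nat.factorial n : ℚ))⁻¹ • ∏ r ∈ Finset.range (n / 2), ((a - (r : R)) * (b - (r : R)))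
    else 0

noncomputable def f₄ {R : Type*} [CommRing R] [Algebra ℚ R] (a b : R) : R⟦X⟧ :=
  PowerSeries.mk fun n =>
    if n % 2 = 1 then
      ((Nat.factorial n : ℚ))⁻¹ • ∏ r ∈ Finset.range (n / 2),
        ((a - (r : R) - algebraMap ℚ R (1/2)) * (b - (r : R) - algebraMap ℚ R (1/2)))
    else 0

set_option linter.unusedSectionVars false

section Aux
variable {R : Type*} [CommRing R] [Algebra ℚ R]

lemma coeff_theta (g : R⟦X⟧) (n : ℕ) : (coeff n) (X * d⁄dX R g) = coeff n g * n := by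
  cases n with
  | zero => simp
  | succ m => rw [coeff_succ_X_mul, coeff_derivative]; push_cast; ring

lemma x2_dd (h : R⟦X⟧) : (X:R⟦X⟧)^2 * d⁄dX R (d⁄dX R h) = X * d⁄dX R (X * d⁄dX R h) - X * d⁄dX R h := by
  rw [Derivation.leibniz, derivative_X]; simp [smul_eq_mul]; ring

lemma fact_key (k : ℕ) :
    ((k+k+1+1).factorial:ℚ)⁻¹ * ((k:ℚ)+k+1+1) * ((k:ℚ)+k+1) = ((k+k).factorial:ℚ)⁻¹ := by
  rw [Nat.factorial_succ, Nat.factorial_succ]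
  have h1 : ((k+k+1:ℕ):ℚ) ≠ 0 := by positivity
  have h2 : (((k+k).factorial:ℕ):ℚ) ≠ 0 := Nat.cast_ne_zero.2 (k+k).factorial_ne_zero
  push_cast
  field_simp

lemma fact_keyR (k : ℕ) :
    algebraMap ℚ R (((k+k+1+1).factorial:ℚ))⁻¹ * ((k:R)+k+1+1) * ((k:R)+k+1)
      = algebraMap ℚ R (((k+k).factorial:ℚ))⁻¹ := by
  have h := congrArg (algebraMap ℚ R) (fact_key k)
  simpa [map_mul, map_add, map_one, map_natCast] using h

lemma halfR : algebraMap ℚ R (1/2) * 2 = 1 := by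
  rw [show (2:R) = algebraMap ℚ R 2 from (map_ofNat _ 2).symm, ← map_mul]; norm_num

lemma quarterR : algebraMap ℚ R (1/4) * 4 = 1 := by
  rw [show (4:R) = algebraMap ℚ R 4 from (map_ofNat _ 4).symm, ← map_mul]; norm_num

lemma ode1 (a b : R) :
    ((1/4 : ℚ) • (X:R⟦X⟧) ^ 2 - 1) * d⁄dX R (d⁄dX R (f₁ a b))
      + C (algebraMap ℚ R (1/2) * (a+b) + algebraMap ℚ R (1/4)) * (X * d⁄dX R (f₁ a b))
      + C (a*b) * f₁ a b = 0 := by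
  have : ((1/4 : ℚ) • (X:R⟦X⟧) ^ 2 - 1) * d⁄dX R (d⁄dX R (f₁ a b))
      = (1/4 : ℚ) • (X * d⁄dX R (X * d⁄dX R (f₁ a b)) - X * d⁄dX R (f₁ a b))
        - d⁄dX R (d⁄dX R (f₁ a b)) := by
    rw [← x2_dd, sub_mul, smul_mul_assoc, one_mul]
  rw [this]
  ext n
  simp only [map_add, map_sub, map_smul, coeff_theta, coeff_derivative, coeff_C_mul,
    map_zero, f₁, coeff_mk]
  rcases Nat.even_or_odd n with ⟨k,hk⟩ | ⟨k,hk⟩ <;> subst hk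
  · have e1 : (k+k) % 2 = 0 := by omega
    have e2 : (k+k+1+1) % 2 = 0 := by omega
    have d1 : (k+k)/2 = k := by omega
    have d2 : (k+k+1+1)/2 = k+1 := by omega
    simp only [coeff_smul, map_sub, map_add, add_mul, mul_assoc, coeff_theta, coeff_mk, e1, e2, d1, d2,
      if_true, reduceIte, Finset.prod_range_succ, coeff_C_mul, coeff_derivative, smul_eq_mul]
    simp only [Algebra.smul_def]
    push_cast
    linear_combination -((∏ x ∈ Finset.range k, (a * (b + (x:R)) + (x:R) * (b + (x:R)))) *
        (a * (b + (k:R)) + (k:R) * (b + (k:R)))) * fact_keyR (R := R) k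
      + (algebraMap ℚ R (((k+k).factorial:ℚ))⁻¹ *
          (∏ x ∈ Finset.range k, (a * (b + (x:R)) + (x:R) * (b + (x:R)))) * (k:R)^2) * quarterR (R := R)
      + (algebraMap ℚ R (((k+k).factorial:ℚ))⁻¹ *
          (∏ x ∈ Finset.range k, (a * (b + (x:R)) + (x:R) * (b + (x:R)))) * (k:R) * (a+b)) * halfR (R := R)
  · have e1 : (2*k+1) % 2 ≠ 0 := by omega
    have e2 : (2*k+1+1+1) % 2 ≠ 0 := by omega
    have e3 : (1 + k*2) % 2 ≠ 0 := by omega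
    simp only [coeff_smul, map_sub, map_add, add_mul, mul_assoc, coeff_theta, coeff_mk, e1, e2, e3,
      if_false, reduceIte, coeff_C_mul, coeff_derivative, smul_eq_mul]
    simp

lemma fact_keyR2 (k : ℕ) :
    algebraMap ℚ R (((2*k+1+1+1).factorial:ℚ))⁻¹ * (2*(k:R)+1+1+1) * (2*(k:R)+1+1)
      = algebraMap ℚ R (((2*k+1).factorial:ℚ))⁻¹ := by
  have key : ((2*k+1+1+1).factorial:ℚ)⁻¹ * (2*(k:ℚ)+1+1+1) * (2*(k:ℚ)+1+1)
      = ((2*k+1).factorial:ℚ)⁻¹ := by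
    rw [Nat.factorial_succ (2*k+1+1), Nat.factorial_succ (2*k+1)]
    have h1 : ((2*k+1+1:ℕ):ℚ) ≠ 0 := by positivity
    have h2 : (((2*k+1).factorial:ℕ):ℚ) ≠ 0 := Nat.cast_ne_zero.2 (2*k+1).factorial_ne_zero
    push_cast
    field_simp
  have h := congrArg (algebraMap ℚ R) key
  simpa [map_mul, map_add, map_one, map_natCast, map_ofNat] using h

lemma halfsqR : algebraMap ℚ R (1/2) * algebraMap ℚ R (1/2) = algebraMap ℚ R (1/4) := by
  rw [← map_mul]; norm_num

lemma ode2 (a b : R) :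
    ((1/4 : ℚ) • (X:R⟦X⟧) ^ 2 - 1) * d⁄dX R (d⁄dX R (f₂ a b))
      + C (algebraMap ℚ R (1/2) * (a+b) + algebraMap ℚ R (1/4)) * (X * d⁄dX R (f₂ a b))
      + C (a*b) * f₂ a b = 0 := by
  have : ((1/4 : ℚ) • (X:R⟦X⟧) ^ 2 - 1) * d⁄dX R (d⁄dX R (f₂ a b))
      = (1/4 : ℚ) • (X * d⁄dX R (X * d⁄dX R (f₂ a b)) - X * d⁄dX R (f₂ a b))
        - d⁄dX R (d⁄dX R (f₂ a b)) := by
    rw [← x2_dd, sub_mul, smul_mul_assoc, one_mul]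
  rw [this]
  ext n
  simp only [map_add, map_sub, map_smul, coeff_theta, coeff_derivative, coeff_C_mul,
    map_zero, f₂, coeff_mk]
  rcases Nat.even_or_odd n with ⟨k,hk⟩ | ⟨k,hk⟩ <;> subst hk
  · have e1 : (k+k) % 2 ≠ 1 := by omega
    have e2 : (k+k+1+1) % 2 ≠ 1 := by omega
    simp only [coeff_smul, map_sub, map_add, add_mul, mul_assoc, coeff_theta, coeff_mk, e1, e2,
      if_false, reduceIte, coeff_C_mul, coeff_derivative, smul_eq_mul]
    simp
  · have e1 : (2*k+1) % 2 = 1 := by omega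
    have e2 : (2*k+1+1+1) % 2 = 1 := by omega
    have e3 : (1 + k*2) % 2 = 1 := by omega
    have d1 : (2*k+1)/2 = k := by omega
    have d2 : (2*k+1+1+1)/2 = k+1 := by omega
    have d3 : (1 + k*2)/2 = k := by omega
    simp only [coeff_smul, map_sub, map_add, add_mul, mul_assoc, coeff_theta, coeff_mk,
      e1, e2, e3, d1, d2, d3, if_true, reduceIte, Finset.prod_range_succ, coeff_C_mul,
      coeff_derivative, smul_eq_mul]
    simp only [Algebra.smul_def]
    push_cast
    obtain ⟨H, hH⟩ : ∃ H, algebraMap ℚ R (1/2) = H := ⟨_, rfl⟩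
    have h2' : H * 2 = 1 := by rw [← hH]; exact halfR
    have h4' : H * H = algebraMap ℚ R (1/4) := by rw [← hH]; exact halfsqR
    rw [hH]
    set P := ∏ x ∈ Finset.range k, (a * (b + (x:R) + H) + (x:R) * (b + (x:R) + H) + H * (b + (x:R) + H)) with hP
    set A := algebraMap ℚ R (((2*k+1).factorial:ℚ))⁻¹ with hA
    linear_combination (-(P * ((a+(k:R)+H) * (b+(k:R)+H)))) * fact_keyR2 (R := R) k
      + (A * P * ((k:R)^2 + (k:R))) * quarterR (R := R)
      + (A * P * ((k:R)*(a+b) - (k:R))) * h2'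
      + (-(A * P)) * h4'

end Aux

/-- Wronskian identity: `(x²/4 − 1)·(f₂″·f₁′ − f₂′·f₁″) = a·b·(f₂′·f₁ − f₂·f₁′)`. -/
theorem stmt7 {R : Type*} [CommRing R] [Algebra ℚ R] (a b : R) :
    ((1/4 : ℚ) • (PowerSeries.X : R⟦X⟧) ^ 2 - 1) *
        (d⁄dX R (d⁄dX R (f₂ a b)) * d⁄dX R (f₁ a b) -
          d⁄dX R (f₂ a b) * d⁄dX R (d⁄dX R (f₁ a b))) =
      C (a * b) * (d⁄dX R (f₂ a b) * f₁ a b - f₂ a b * d⁄dX R (f₁ a b)) := by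
  linear_combination (d⁄dX R (f₁ a b)) * ode2 a b - (d⁄dX R (f₂ a b)) * ode1 a b
end

section
/- Let R be a commutative ring that is a ℚ-algebra and let a, b ∈ R. A formal power series Φ ∈ R[[y]] satisfies the formal differential equation (y²/4 − 1)·Φ″ + (1/4 + (a+b)/2)·y·Φ′ + a·b·Φ = 0 if and only if Φ = c₀·f₁ + c₁·f₂, where c₀ and c₁ are the coefficients of y⁰ and y¹ in Φ, and where f₁ = Σ_{k≥0} (∏_{r=1}^{k} (a+r−1)(b+r−1)) · y^{2k}/(2k)! and f₂ = Σ_{k≥0} (∏_{r=1}^{k} (a+r−1/2)(b+r−1/2)) · y^{2k+1}/(2k+1)!. -/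
open PowerSeries

section Aux

variable {R : Type*} [CommRing R] [Algebra ℚ R]

private lemma coeff_lhs (a b : R) (Φ : R⟦X⟧) (n : ℕ) :
    coeff n (((1/4 : ℚ) • (PowerSeries.X : R⟦X⟧) ^ 2 - 1) * d⁄dX R (d⁄dX R Φ) +
        ((1/4 : ℚ) • (1 : R⟦X⟧) + (1/2 : ℚ) • C (a + b)) * PowerSeries.X * d⁄dX R Φ +
        C (a * b) * Φ)
    = (a + algebraMap ℚ R ((n : ℚ)/2)) * (b + algebraMap ℚ R ((n : ℚ)/2)) * coeff n Φ
      - ((((n : ℚ)+1)*((n : ℚ)+2))) • coeff (n+2) Φ := by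
  have h14 : (1/4 : ℚ) = (1/2) * (1/2) := by norm_num
  simp only [sub_mul, add_mul, one_mul, smul_mul_assoc, mul_assoc]
  simp only [map_add, map_sub, coeff_smul, coeff_C_mul, coeff_derivative]
  obtain _ | _ | m := n
  · rw [show ((0:ℕ):ℚ) = 0 by norm_num]
    simp only [coeff_zero_X_mul, coeff_X_pow_mul']
    norm_num [Algebra.smul_def, map_ofNat]
    ring
  · simp only [coeff_succ_X_mul, coeff_X_pow_mul', if_neg (by omega : ¬ 2 ≤ 1),
      coeff_derivative, h14, Algebra.smul_def, map_mul, map_zero, map_add, add_mul, mul_assoc,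
      coeff_C_mul]
    simp only [map_ofNat, Nat.cast_ofNat, map_one, map_add]
    push_cast
    ring
  · have hle : 2 ≤ m + 2 := by omega
    have h2 : ((m+2:ℕ):ℚ)/2 = ((m+2:ℕ):ℚ) * (1/2) := by ring
    simp only [coeff_succ_X_mul, coeff_X_pow_mul', if_pos hle, Nat.add_sub_cancel,
      coeff_derivative, h2, h14, Algebra.smul_def, map_mul, map_natCast, map_ofNat,
      Nat.cast_ofNat, map_add, map_one, add_mul, mul_assoc, coeff_C_mul]
    push_cast
    ring

private lemma fact_aux (k : ℕ) :
    ((k+2).factorial : ℚ)⁻¹ * (((k:ℚ)+1)*((k:ℚ)+2)) = ((k).factorial : ℚ)⁻¹ := by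
  have h1 : ((k+2).factorial : ℚ) = (((k:ℚ))+1)*(((k:ℚ))+2) * ((k).factorial:ℚ) := by
    rw [show k+2 = (k+1)+1 by ring, Nat.factorial_succ, Nat.factorial_succ]
    push_cast; ring
  have h2 : ((k).factorial : ℚ) ≠ 0 := Nat.cast_ne_zero.2 (Nat.factorial_ne_zero _)
  have h3 : (((k:ℚ))+1) ≠ 0 := by positivity
  have h4 : (((k:ℚ))+2) ≠ 0 := by positivity
  field_simp [h1]
  exact h1.symm

private lemma rec_f₁ (a b : R) (n : ℕ) :
    (((n:ℚ)+1)*((n:ℚ)+2)) • coeff (n+2) (f₁ a b)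
      = (a + algebraMap ℚ R ((n:ℚ)/2)) * (b + algebraMap ℚ R ((n:ℚ)/2)) * coeff n (f₁ a b) := by
  simp only [f₁, coeff_mk]
  rcases Nat.even_or_odd n with he | ho
  · obtain ⟨m, rfl⟩ : ∃ m, n = 2*m := ⟨n/2, by have := Nat.even_iff.1 he; omega⟩
    rw [if_pos (by omega : (2*m+2) % 2 = 0), if_pos (by omega : (2*m) % 2 = 0),
      show (2*m+2)/2 = m+1 by omega, show (2*m)/2 = m by omega, Finset.prod_range_succ,
      show ((2*m:ℕ):ℚ)/2 = ((m:ℕ):ℚ) by push_cast; ring, map_natCast,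
      smul_smul, show (((2*m:ℕ):ℚ)+1)*(((2*m:ℕ):ℚ)+2) * ((2*m+2).factorial : ℚ)⁻¹
        = ((2*m).factorial : ℚ)⁻¹ by rw [mul_comm]; exact_mod_cast fact_aux (2*m),
      Algebra.smul_def, Algebra.smul_def]
    ring
  · have h : n % 2 = 1 := Nat.odd_iff.1 ho
    rw [if_neg (by omega), if_neg (by omega), smul_zero, mul_zero]

private lemma rec_f₂ (a b : R) (n : ℕ) :
    (((n:ℚ)+1)*((n:ℚ)+2)) • coeff (n+2) (f₂ a b)
      = (a + algebraMap ℚ R ((n:ℚ)/2)) * (b + algebraMap ℚ R ((n:ℚ)/2)) * coeff n (f₂ a b) := by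
  simp only [f₂, coeff_mk]
  rcases Nat.even_or_odd n with he | ho
  · have h : n % 2 = 0 := Nat.even_iff.1 he
    rw [if_neg (by omega), if_neg (by omega), smul_zero, mul_zero]
  · obtain ⟨m, rfl⟩ : ∃ m, n = 2*m+1 := ⟨n/2, by have := Nat.odd_iff.1 ho; omega⟩
    rw [if_pos (by omega : (2*m+1+2) % 2 = 1), if_pos (by omega : (2*m+1) % 2 = 1),
      show (2*m+1+2)/2 = m+1 by omega, show (2*m+1)/2 = m by omega, Finset.prod_range_succ,
      show ((2*m+1:ℕ):ℚ)/2 = ((m:ℕ):ℚ) + 1/2 by push_cast; ring, map_add, map_natCast,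
      smul_smul, show (((2*m+1:ℕ):ℚ)+1)*(((2*m+1:ℕ):ℚ)+2) * ((2*m+1+2).factorial : ℚ)⁻¹
        = ((2*m+1).factorial : ℚ)⁻¹ by rw [mul_comm]; exact_mod_cast fact_aux (2*m+1),
      Algebra.smul_def, Algebra.smul_def]
    ring

private lemma rec_g (a b c₀ c₁ : R) (n : ℕ) :
    (((n:ℚ)+1)*((n:ℚ)+2)) • coeff (n+2) (C c₀ * f₁ a b + C c₁ * f₂ a b)
      = (a + algebraMap ℚ R ((n:ℚ)/2)) * (b + algebraMap ℚ R ((n:ℚ)/2)) *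
        coeff n (C c₀ * f₁ a b + C c₁ * f₂ a b) := by
  rw [map_add, map_add, coeff_C_mul, coeff_C_mul, coeff_C_mul, coeff_C_mul, smul_add,
    ← mul_smul_comm, ← mul_smul_comm, rec_f₁, rec_f₂]
  ring

private lemma coeff_zero_g (a b c₀ c₁ : R) :
    coeff 0 (C c₀ * f₁ a b + C c₁ * f₂ a b) = c₀ := by
  simp [f₁, f₂, coeff_mk, Nat.factorial]

private lemma coeff_one_g (a b c₀ c₁ : R) :
    coeff 1 (C c₀ * f₁ a b + C c₁ * f₂ a b) = c₁ := by
  simp [f₁, f₂, coeff_mk, Nat.factorial]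

end Aux

/-- A power series `Φ` satisfies
`(y²/4 − 1)·Φ″ + (1/4 + (a+b)/2)·y·Φ′ + a·b·Φ = 0` iff `Φ = c₀·f₁ + c₁·f₂`, where
`c₀, c₁` are the coefficients of `y⁰, y¹` of `Φ`. -/
theorem stmt10 {R : Type*} [CommRing R] [Algebra ℚ R] (a b : R) (Φ : R⟦X⟧) :
    ((1/4 : ℚ) • (PowerSeries.X : R⟦X⟧) ^ 2 - 1) * d⁄dX R (d⁄dX R Φ) +
        ((1/4 : ℚ) • (1 : R⟦X⟧) + (1/2 : ℚ) • C (a + b)) * PowerSeries.X * d⁄dX R Φ +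
        C (a * b) * Φ = 0 ↔
      Φ = C (coeff 0 Φ) * f₁ a b + C (coeff 1 Φ) * f₂ a b := by
  constructor
  · intro h
    have h' : ∀ n : ℕ, (((n:ℚ)+1)*((n:ℚ)+2)) • coeff (n+2) Φ
        = (a + algebraMap ℚ R ((n:ℚ)/2)) * (b + algebraMap ℚ R ((n:ℚ)/2)) * coeff n Φ := by
      intro n
      have h0 := congrArg (coeff n) h
      rw [coeff_lhs, map_zero, sub_eq_zero] at h0
      exact h0.symm
    ext n
    induction n using Nat.twoStepInduction with
    | zero => rw [coeff_zero_g]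
    | one => rw [coeff_one_g]
    | more n ih _ =>
      have hq : (((n:ℚ)+1)*((n:ℚ)+2)) ≠ 0 := by positivity
      have key : (((n:ℚ)+1)*((n:ℚ)+2)) • coeff (n+2) Φ
          = (((n:ℚ)+1)*((n:ℚ)+2)) • coeff (n+2)
              (C (coeff 0 Φ) * f₁ a b + C (coeff 1 Φ) * f₂ a b) := by
        rw [h' n, ih, rec_g]
      rw [← one_smul ℚ (coeff (n+2) Φ), ← inv_mul_cancel₀ hq, mul_smul, key, ← mul_smul,
        inv_mul_cancel₀ hq, one_smul]
  · intro h
    ext n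
    rw [map_zero, coeff_lhs, sub_eq_zero]
    nth_rewrite 1 [h]
    nth_rewrite 3 [h]
    exact (rec_g a b _ _ n).symm
end
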